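/- There exist two simple graphs G₁ and G₂ on the vertex type Fin 6 that are not isomorphic as graphs but have equal multisets of degree polynomials of vertices; i.e., ∃ G₁ G₂ : SimpleGraph (Fin 6), (the Multiset image of dp_{G₁} over all vertices) = (the Multiset image of dp_{G₂} over all vertices) ∧ ¬ Nonempty (G₁ ≃g G₂). -/

import Mathlib

open Polynomial

/-- The neighbor finset of a vertex (with classical decidability of adjacency). -/
noncomputable def nbhd {V : Type*} [Fintype V] (G : SimpleGraph V) (v : V) : Finset V :=
  letI := Classical.decRel G.Adj
  G.neighborFinset v

/-- The degree of a vertex (with classical decidability of adjacency). -/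
noncomputable def degc {V : Type*} [Fintype V] (G : SimpleGraph V) (v : V) : ℕ :=
  (nbhd G v).card

/-- The degree polynomial of a vertex `v`: the coefficient of `X^i` is the number
of neighbors of `v` having degree `i`. -/
noncomputable def dp {V : Type*} [Fintype V] (G : SimpleGraph V) (v : V) : ℕ[X] :=
  ∑ w ∈ nbhd G v, X ^ degc G w

/-- The degree polynomial of a graph `G`: the coefficient of `X^i` is the number
of vertices of `G` of degree `i`. -/
noncomputable def dpG {V : Type*} [Fintype V] (G : SimpleGraph V) : ℕ[X] :=
  ∑ v, X ^ degc G v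


def C6 : SimpleGraph (Fin 6) where
  Adj v w := v ≠ w ∧ (w = v + 1 ∨ v = w + 1)
  symm := ⟨by intro v w; revert v w; decide⟩
  loopless := ⟨by intro v; revert v; decide⟩

def TT : SimpleGraph (Fin 6) where
  Adj v w := v ≠ w ∧ v.val / 3 = w.val / 3
  symm := ⟨by intro v w; revert v w; decide⟩
  loopless := ⟨by intro v; revert v; decide⟩

instance : DecidableRel C6.Adj := fun _ _ => inferInstanceAs (Decidable (_ ∧ _))
instance : DecidableRel TT.Adj := fun _ _ => inferInstanceAs (Decidable (_ ∧ _))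

lemma nbhd_eq {V : Type*} [Fintype V] (G : SimpleGraph V) [DecidableRel G.Adj] (v : V) :
    nbhd G v = G.neighborFinset v := by
  ext w; simp [nbhd, SimpleGraph.mem_neighborFinset]

lemma degc_eq {V : Type*} [Fintype V] (G : SimpleGraph V) [DecidableRel G.Adj] (v : V) :
    degc G v = G.degree v := by
  rw [degc, nbhd_eq]; rfl

lemma degC6 : ∀ v, C6.degree v = 2 := by decide
lemma degTT : ∀ v, TT.degree v = 2 := by decide

lemma dp_const {V : Type*} [Fintype V] (G : SimpleGraph V) [DecidableRel G.Adj]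
    (h : ∀ v, G.degree v = 2) (v : V) : dp G v = 2 • (X ^ 2 : ℕ[X]) := by
  rw [dp, nbhd_eq]
  have : ∀ w ∈ G.neighborFinset v, X ^ degc G w = (X ^ 2 : ℕ[X]) := by
    intro w _; rw [degc_eq, h]
  rw [Finset.sum_congr rfl this, Finset.sum_const]
  congr 1
  exact (h v).symm ▸ rfl

/-- There exist two non-isomorphic simple graphs on `Fin 6` with equal multisets of
vertex degree polynomials. -/
theorem exists_nonisomorphic_same_dp_multiset :
    ∃ G₁ G₂ : SimpleGraph (Fin 6),
      Finset.univ.val.map (dp G₁) = Finset.univ.val.map (dp G₂)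
      ∧ ¬ Nonempty (G₁ ≃g G₂) := by
  refine ⟨C6, TT, ?_, ?_⟩
  · exact Multiset.map_congr rfl fun v _ => by
      rw [dp_const C6 degC6, dp_const TT degTT]
  · rintro ⟨f⟩
    have h01 : TT.Adj 0 1 := by decide
    have h12 : TT.Adj 1 2 := by decide
    have h02 : TT.Adj 0 2 := by decide
    have notri : ∀ a b c : Fin 6, ¬(C6.Adj a b ∧ C6.Adj b c ∧ C6.Adj a c) := by decide
    exact notri _ _ _ ⟨f.symm.map_adj_iff.mpr h01, f.symm.map_adj_iff.mpr h12,
      f.symm.map_adj_iff.mpr h02⟩
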